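/- For n = 5, α = 1/(2cos(π/5)), and Hermitian operators A₁,…,A₅ satisfying Aᵢ² ≤ I, with B = −(1/2)∑ᵢ{Aᵢ, A_{i+1}} − α²∑ᵢ Aᵢ (indices mod 5), one has the operator inequality B ≤ 3(1+α²)·I; equivalently, for every unit vector ψ, ⟨ψ|B|ψ⟩ ≤ 3(1+α²). -/

import Mathlib

open Real Matrix
open scoped ComplexOrder

set_option maxHeartbeats 2000000 in
private lemma key_identity (d : ℕ) (α : ℝ) (h : α^2 = 1 - α) (hpos : (0:ℝ) < α)
    (h11 : (11:ℝ) < 18*α) (hlt : α < 1)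
    (A0 A1 A2 A3 A4 : Matrix (Fin d) (Fin d) ℂ) :
    (3*(1+α^2)) • (1 : Matrix (Fin d) (Fin d) ℂ)
      - ((-(1/2) : ℝ) • ((A0*A1 + A1*A0) + (A1*A2 + A2*A1) + (A2*A3 + A3*A2)
          + (A3*A4 + A4*A3) + (A4*A0 + A0*A4))
        - (α^2) • (A0 + A1 + A2 + A3 + A4))
    = (1/(2*α)) • ((1 - A0*A0) + (1 - A1*A1) + (1 - A2*A2) + (1 - A3*A3) + (1 - A4*A4))
      + (1/(2*α*(18*α-11))) •
          (((18*α-11) • (1:Matrix (Fin d) (Fin d) ℂ) + (2*α-1) • (A0+A1+A2+A3+A4))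
          * ((18*α-11) • (1:Matrix (Fin d) (Fin d) ℂ) + (2*α-1) • (A0+A1+A2+A3+A4)))
      + ((1+α^2)/(20*α^3)) •
          (((2*α) • A0 + (α^2) • A1 + (-1:ℝ) • A2 + (-1:ℝ) • A3 + (α^2) • A4)
          * ((2*α) • A0 + (α^2) • A1 + (-1:ℝ) • A2 + (-1:ℝ) • A3 + (α^2) • A4))
      + ((1+α^2)/(20*α^3*(4-α^2))) •
          (((2*α+1) • A1 + (2-α) • A2 + (-(2-α)) • A3 + (-(2*α+1)) • A4)
          * ((2*α+1) • A1 + (2-α) • A2 + (-(2-α)) • A3 + (-(2*α+1)) • A4)) := by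
  have hne : α ≠ 0 := ne_of_gt hpos
  have hne2 : (18*α-11) ≠ 0 := by linarith
  have hne3 : (4-α^2) ≠ 0 := by nlinarith
  have hne2' : (-11 + α*18) ≠ 0 := by linarith
  have h3 : α^3 = -1 + 2*α := by nlinarith
  have h4 : α^4 = 2 - 3*α := by nlinarith
  have h5 : α^5 = -3 + 5*α := by nlinarith
  have h6 : α^6 = 5 - 8*α := by nlinarith
  have h7 : α^7 = -8 + 13*α := by nlinarith
  have h8 : α^8 = 13 - 21*α := by nlinarith
  have h9 : α^9 = -21 + 34*α := by nlinarith
  have h10 : α^10 = 34 - 55*α := by nlinarith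
  have h11' : α^11 = -55 + 89*α := by nlinarith
  have h12 : α^12 = 89 - 144*α := by nlinarith
  have h13 : α^13 = -144 + 233*α := by nlinarith
  have h14 : α^14 = 233 - 377*α := by nlinarith
  have h15 : α^15 = -377 + 610*α := by nlinarith
  have h16 : α^16 = 610 - 987*α := by nlinarith
  simp only [mul_add, add_mul, smul_mul_assoc, mul_smul_comm, mul_one, one_mul, smul_smul]
  match_scalars <;>
    (field_simp; ring_nf;
     simp only [h16, h15, h14, h13, h12, h11', h10, h9, h8, h7, h6, h5, h4, h3, h]; ring_nf)
  all_goals (field_simp; ring_nf; simp only [h4, h3, h]; ring_nf)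

private lemma herm_smul {d : ℕ} (c : ℝ) {M : Matrix (Fin d) (Fin d) ℂ}
    (h : M.IsHermitian) : (c • M).IsHermitian := by
  show (c • M)ᴴ = c • M
  rw [Matrix.conjTranspose_smul, star_trivial, h.eq]

private lemma psd_smul {d : ℕ} {c : ℝ} (hc : 0 ≤ c) {M : Matrix (Fin d) (Fin d) ℂ}
    (h : M.PosSemidef) : (c • M).PosSemidef := by
  refine Matrix.PosSemidef.of_dotProduct_mulVec_nonneg (herm_smul c h.1) fun x => ?_
  rw [Matrix.smul_mulVec, dotProduct_smul, Complex.real_smul]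
  exact mul_nonneg (Complex.zero_le_real.mpr hc) (h.dotProduct_mulVec_nonneg x)

private lemma sq_psd {d : ℕ} {M : Matrix (Fin d) (Fin d) ℂ}
    (h : M.IsHermitian) : (M * M).PosSemidef := by
  have := Matrix.posSemidef_conjTranspose_mul_self M
  rwa [h.eq] at this

theorem kcbs5_quantum_bound (d : ℕ)
    (α : ℝ) (hα : α = 1 / (2 * Real.cos (π / 5)))
    (A : ZMod 5 → Matrix (Fin d) (Fin d) ℂ)
    (hherm : ∀ i, (A i).IsHermitian)
    (hle : ∀ i, ((1 : Matrix (Fin d) (Fin d) ℂ) - A i ^ 2).PosSemidef)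
    (B : Matrix (Fin d) (Fin d) ℂ)
    (hB : B = (-(1 / 2) : ℝ) • ∑ i : ZMod 5, (A i * A (i + 1) + A (i + 1) * A i)
      - (α ^ 2) • ∑ i : ZMod 5, A i) :
    ((3 * (1 + α ^ 2)) • (1 : Matrix (Fin d) (Fin d) ℂ) - B).PosSemidef ∧
    ∀ ψ : Fin d → ℂ, star ψ ⬝ᵥ ψ = 1 →
      (star ψ ⬝ᵥ (B *ᵥ ψ)).re ≤ 3 * (1 + α ^ 2) := by
  -- facts about α
  have h5 : (√5)^2 = 5 := Real.sq_sqrt (by norm_num)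
  have h5l : 2.23 < √5 := by nlinarith [Real.sqrt_nonneg 5]
  have h5u : √5 < 2.24 := by nlinarith [Real.sqrt_nonneg 5]
  have hαval : α = (√5-1)/2 := by
    rw [hα, Real.cos_pi_div_five]
    rw [div_eq_iff (by nlinarith)]
    nlinarith
  have hsq : α^2 = 1 - α := by rw [hαval]; nlinarith
  have hpos : (0:ℝ) < α := by rw [hαval]; nlinarith
  have h11 : (11:ℝ) < 18*α := by rw [hαval]; nlinarith
  have hlt : α < 1 := by rw [hαval]; nlinarith
  -- expand the sums
  have hsum : ∀ f : ZMod 5 → Matrix (Fin d) (Fin d) ℂ,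
      ∑ i : ZMod 5, f i = f 0 + f 1 + f 2 + f 3 + f 4 := by
    intro f
    show ∑ i : Fin 5, f i = _
    exact Fin.sum_univ_five _
  have e0 : (0:ZMod 5)+1 = 1 := by decide
  have e1 : (1:ZMod 5)+1 = 2 := by decide
  have e2 : (2:ZMod 5)+1 = 3 := by decide
  have e3 : (3:ZMod 5)+1 = 4 := by decide
  have e4 : (4:ZMod 5)+1 = 0 := by decide
  have hkey : (3 * (1 + α ^ 2)) • (1 : Matrix (Fin d) (Fin d) ℂ) - B
      = (1/(2*α)) • ((1 - A 0 * A 0) + (1 - A 1 * A 1) + (1 - A 2 * A 2)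
            + (1 - A 3 * A 3) + (1 - A 4 * A 4))
        + (1/(2*α*(18*α-11))) •
            (((18*α-11) • (1:Matrix (Fin d) (Fin d) ℂ) + (2*α-1) • (A 0+A 1+A 2+A 3+A 4))
            * ((18*α-11) • (1:Matrix (Fin d) (Fin d) ℂ) + (2*α-1) • (A 0+A 1+A 2+A 3+A 4)))
        + ((1+α^2)/(20*α^3)) •
            (((2*α) • A 0 + (α^2) • A 1 + (-1:ℝ) • A 2 + (-1:ℝ) • A 3 + (α^2) • A 4)
            * ((2*α) • A 0 + (α^2) • A 1 + (-1:ℝ) • A 2 + (-1:ℝ) • A 3 + (α^2) • A 4))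
        + ((1+α^2)/(20*α^3*(4-α^2))) •
            (((2*α+1) • A 1 + (2-α) • A 2 + (-(2-α)) • A 3 + (-(2*α+1)) • A 4)
            * ((2*α+1) • A 1 + (2-α) • A 2 + (-(2-α)) • A 3 + (-(2*α+1)) • A 4)) := by
    rw [hB]
    simp only [hsum, e0, e1, e2, e3, e4]
    exact key_identity d α hsq hpos h11 hlt (A 0) (A 1) (A 2) (A 3) (A 4)
  -- positivity of the right-hand side
  have hle' : ∀ i, ((1 : Matrix (Fin d) (Fin d) ℂ) - A i * A i).PosSemidef := by
    intro i
    have := hle i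
    rwa [pow_two] at this
  have hsumherm : (A 0 + A 1 + A 2 + A 3 + A 4).IsHermitian :=
    ((((hherm 0).add (hherm 1)).add (hherm 2)).add (hherm 3)).add (hherm 4)
  have hR0 : (((18*α-11) • (1:Matrix (Fin d) (Fin d) ℂ)
      + (2*α-1) • (A 0+A 1+A 2+A 3+A 4))).IsHermitian :=
    (herm_smul _ Matrix.isHermitian_one).add (herm_smul _ hsumherm)
  have hR1 : ((2*α) • A 0 + (α^2) • A 1 + (-1:ℝ) • A 2 + (-1:ℝ) • A 3
      + (α^2) • A 4).IsHermitian :=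
    ((((herm_smul _ (hherm 0)).add (herm_smul _ (hherm 1))).add
      (herm_smul _ (hherm 2))).add (herm_smul _ (hherm 3))).add (herm_smul _ (hherm 4))
  have hR2 : ((2*α+1) • A 1 + (2-α) • A 2 + (-(2-α)) • A 3
      + (-(2*α+1)) • A 4).IsHermitian :=
    (((herm_smul _ (hherm 1)).add (herm_smul _ (hherm 2))).add
      (herm_smul _ (hherm 3))).add (herm_smul _ (hherm 4))
  have hk0 : (0:ℝ) ≤ 1/(2*α) := by positivity
  have hk1 : (0:ℝ) ≤ 1/(2*α*(18*α-11)) := by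
    apply div_nonneg (by norm_num); nlinarith
  have hk2 : (0:ℝ) ≤ (1+α^2)/(20*α^3) := by positivity
  have hk3 : (0:ℝ) ≤ (1+α^2)/(20*α^3*(4-α^2)) := by
    apply div_nonneg (by positivity)
    have h3p : (0:ℝ) < α^3 := pow_pos hpos 3
    nlinarith [h3p]
  have hP : ((3 * (1 + α ^ 2)) • (1 : Matrix (Fin d) (Fin d) ℂ) - B).PosSemidef := by
    rw [hkey]
    exact (((psd_smul hk0 (((((hle' 0).add (hle' 1)).add (hle' 2)).add (hle' 3)).add
        (hle' 4))).add (psd_smul hk1 (sq_psd hR0))).add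
        (psd_smul hk2 (sq_psd hR1))).add (psd_smul hk3 (sq_psd hR2))
  refine ⟨hP, fun ψ hψ => ?_⟩
  have h0 := hP.dotProduct_mulVec_nonneg ψ
  rw [Matrix.sub_mulVec, Matrix.smul_mulVec, Matrix.one_mulVec,
    dotProduct_sub, dotProduct_smul, hψ, Complex.real_smul, mul_one] at h0
  rw [Complex.le_def] at h0
  have hre := h0.1
  simp only [Complex.zero_re, Complex.sub_re, Complex.ofReal_re] at hre
  linarith
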